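/- Let k ∈ ℕ, δ > 0, let ϖ be a modulus of continuity on (0,δ], and let f : ℝⁿ → ℝ be of class C^k such that [∂^α f]_ϖ ≤ L for every multi-index α with |α| = k and some L ≥ 0. Then there is a constant c(n,k) > 0 such that for all x, y ∈ ℝⁿ with 0 < |y| ≤ δ: |f(x+y) − Σ_{|β|≤k} ∂^β f(x) y^β/β!| ≤ c(n,k) · L · ϖ(|y|) · |y|^k. -/

import Mathlib

/-- First-order partial derivative in the `j`-th coordinate direction. -/
noncomputable def pd {n : ℕ} {E : Type*} [NormedAddCommGroup E] [NormedSpace ℝ E]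
    (j : Fin n) (f : (Fin n → ℝ) → E) : (Fin n → ℝ) → E :=
  fun x => fderiv ℝ f x (Pi.single j 1)

/-- Iterated partial derivative `∂^α` for a multi-index `α : Fin n → ℕ`. -/
noncomputable def mpd {n : ℕ} {E : Type*} [NormedAddCommGroup E] [NormedSpace ℝ E]
    (α : Fin n → ℕ) (f : (Fin n → ℝ) → E) : (Fin n → ℝ) → E :=
  (List.finRange n).foldr (fun j g => (pd j)^[α j] g) f

namespace St7

variable {n : ℕ}

lemma contDiff_pd {f : (Fin n → ℝ) → ℝ} {m : ℕ} (j : Fin n)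
    (hf : ContDiff ℝ (m + 1 : ℕ) f) : ContDiff ℝ (m : ℕ) (pd j f) := by
  have h1 : ContDiff ℝ (m : ℕ) (fderiv ℝ f) := hf.fderiv_right (by exact_mod_cast le_rfl)
  have := (ContinuousLinearMap.apply ℝ ℝ (Pi.single j 1 : Fin n → ℝ)).contDiff.comp h1
  exact this

lemma pd_comm {g : (Fin n → ℝ) → ℝ} (hg : ContDiff ℝ 2 g) (i j : Fin n) :
    pd i (pd j g) = pd j (pd i g) := by
  funext x
  have hdiff : ∀ y, HasFDerivAt g (fderiv ℝ g y) y := fun y =>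
    (hg.differentiable (by norm_num) y).hasFDerivAt
  have h1 : ContDiff ℝ 1 (fderiv ℝ g) := hg.fderiv_right le_rfl
  have hx : HasFDerivAt (fderiv ℝ g) (fderiv ℝ (fderiv ℝ g) x) x :=
    ((h1.differentiable one_ne_zero) x).hasFDerivAt
  have sym := second_derivative_symmetric hdiff hx (Pi.single i 1) (Pi.single j 1)
  have key : ∀ a : Fin n, fderiv ℝ (pd a g) x =
      (fderiv ℝ (fderiv ℝ g) x).flip (Pi.single a 1) := by
    intro a
    have hc : DifferentiableAt ℝ (fderiv ℝ g) x := (h1.differentiable one_ne_zero) x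
    have hu : DifferentiableAt ℝ (fun _ : Fin n → ℝ => (Pi.single a 1 : Fin n → ℝ)) x :=
      differentiableAt_const _
    have := fderiv_clm_apply hc hu
    simp [fderiv_const] at this
    exact this
  have e1 : pd i (pd j g) x = fderiv ℝ (fderiv ℝ g) x (Pi.single i 1) (Pi.single j 1) := by
    show fderiv ℝ (pd j g) x (Pi.single i 1) = _
    rw [key j]; rfl
  have e2 : pd j (pd i g) x = fderiv ℝ (fderiv ℝ g) x (Pi.single j 1) (Pi.single i 1) := by
    show fderiv ℝ (pd i g) x (Pi.single j 1) = _
    rw [key i]; rfl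
  rw [e1, e2, sym]

end St7

namespace St7

variable {n : ℕ}

lemma contDiff_pd_iter {m s : ℕ} (j : Fin n) :
    ∀ f : (Fin n → ℝ) → ℝ, ContDiff ℝ (m + s : ℕ) f → ContDiff ℝ (m : ℕ) ((pd j)^[s] f) := by
  induction s with
  | zero => intro f hf; simpa using hf
  | succ s ih =>
    intro f hf
    rw [Function.iterate_succ_apply]
    apply ih
    apply contDiff_pd (m := m + s) j
    have e : (m + s) + 1 = m + (s + 1) := by omega
    rw [e]; exact hf

lemma pd_iter_comm {s : ℕ} (i j : Fin n) :
    ∀ g : (Fin n → ℝ) → ℝ, ContDiff ℝ (s + 1 : ℕ) g →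
      pd j ((pd i)^[s] g) = (pd i)^[s] (pd j g) := by
  induction s with
  | zero => intro g _; rfl
  | succ s ih =>
    intro g hg
    have hg2 : ContDiff ℝ 2 g := hg.of_le (by exact_mod_cast by omega)
    have hpi : ContDiff ℝ (s + 1 : ℕ) (pd i g) := contDiff_pd i hg
    rw [Function.iterate_succ_apply, ih (pd i g) hpi, pd_comm hg2 j i,
      ← Function.iterate_succ_apply]

/-- `mpd` along a list of coordinates. -/
noncomputable def mpdL (l : List (Fin n)) (α : Fin n → ℕ) (f : (Fin n → ℝ) → ℝ) :
    (Fin n → ℝ) → ℝ :=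
  l.foldr (fun j g => (pd j)^[α j] g) f

lemma mpd_eq_mpdL (α : Fin n → ℕ) (f : (Fin n → ℝ) → ℝ) :
    mpd α f = mpdL (List.finRange n) α f := rfl

lemma mpdL_congr {l : List (Fin n)} {α α' : Fin n → ℕ} (h : ∀ i ∈ l, α i = α' i)
    (f : (Fin n → ℝ) → ℝ) : mpdL l α f = mpdL l α' f := by
  induction l with
  | nil => rfl
  | cons i l ih =>
    simp only [mpdL, List.foldr_cons] at *
    rw [ih (fun x hx => h x (List.mem_cons_of_mem _ hx)), h i (List.mem_cons_self (a := i) (l := l))]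

lemma mpdL_append (l₁ l₂ : List (Fin n)) (α : Fin n → ℕ) (f : (Fin n → ℝ) → ℝ) :
    mpdL (l₁ ++ l₂) α f = mpdL l₁ α (mpdL l₂ α f) := by
  simp [mpdL, List.foldr_append]

lemma contDiff_mpdL : ∀ (l : List (Fin n)) (m : ℕ) (α : Fin n → ℕ) (f : (Fin n → ℝ) → ℝ),
    ContDiff ℝ (m + (l.map α).sum : ℕ) f → ContDiff ℝ (m : ℕ) (mpdL l α f) := by
  intro l
  induction l with
  | nil => intro m α f hf; simpa [mpdL] using hf
  | cons i l ih =>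
    intro m α f hf
    show ContDiff ℝ (m : ℕ) ((pd i)^[α i] (mpdL l α f))
    apply contDiff_pd_iter
    apply ih
    have e : (m + α i) + (l.map α).sum = m + ((i :: l).map α).sum := by
      simp [List.sum_cons]; ring
    rw [e]; exact hf

lemma pd_mpdL_comm (j : Fin n) : ∀ (l : List (Fin n)) (α : Fin n → ℕ) (f : (Fin n → ℝ) → ℝ),
    ContDiff ℝ ((l.map α).sum + 1 : ℕ) f →
      pd j (mpdL l α f) = mpdL l α (pd j f) := by
  intro l
  induction l with
  | nil => intro α f _; rfl
  | cons i l ih =>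
    intro α f hf
    have hS : ((i :: l).map α).sum = α i + (l.map α).sum := by simp [List.sum_cons]
    have h1 : ContDiff ℝ (α i + 1 : ℕ) (mpdL l α f) := by
      apply contDiff_mpdL l (α i + 1)
      apply hf.of_le
      rw [hS]
      exact_mod_cast by omega
    have h2 : ContDiff ℝ ((l.map α).sum + 1 : ℕ) f := hf.of_le (by exact_mod_cast by omega)
    show pd j ((pd i)^[α i] (mpdL l α f)) = (pd i)^[α i] (mpdL l α (pd j f))
    rw [pd_iter_comm i j (mpdL l α f) h1, ih α f h2]

end St7

namespace St7

variable {n : ℕ}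

lemma mpd_zero (f : (Fin n → ℝ) → ℝ) : mpd (fun _ => 0) f = f := by
  show (List.finRange n).foldr (fun j g => (pd j)^[0] g) f = f
  induction (List.finRange n) with
  | nil => rfl
  | cons i l ih => simpa using ih

/-- `j`-th unit multi-index. -/
def eI (j : Fin n) : Fin n → ℕ := Pi.single j 1

lemma mpd_succ (j : Fin n) (γ : Fin n → ℕ) (f : (Fin n → ℝ) → ℝ)
    (hf : ContDiff ℝ ((∑ i, γ i) + 1 : ℕ) f) :
    mpd γ (pd j f) = mpd (γ + eI j) f := by
  obtain ⟨l₁, l₂, hl⟩ := List.mem_iff_append.mp (List.mem_finRange j)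
  have hnd : (List.finRange n).Nodup := List.nodup_finRange n
  rw [hl] at hnd
  have hj1 : j ∉ l₁ := by
    intro h
    exact (List.nodup_append'.mp hnd).2.2 h (List.mem_cons_self (a := j) (l := l₂))
  have hj2 : j ∉ l₂ := by
    have := (List.nodup_append'.mp hnd).2.1
    exact (List.nodup_cons.mp this).1
  have hsum : ∑ i, γ i = ((List.finRange n).map γ).sum := by
    rw [Fin.sum_univ_def]
  -- congruence on the pieces
  have hc1 : ∀ i ∈ l₁, (γ + eI j) i = γ i := by
    intro i hi
    have : i ≠ j := fun h => hj1 (h ▸ hi)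
    simp [eI, Pi.single_eq_of_ne this]
  have hc2 : ∀ i ∈ l₂, (γ + eI j) i = γ i := by
    intro i hi
    have : i ≠ j := fun h => hj2 (h ▸ hi)
    simp [eI, Pi.single_eq_of_ne this]
  have hsum2 : ((l₂.map γ).sum + 1 : ℕ) ≤ (∑ i, γ i) + 1 := by
    have : (l₂.map γ).sum ≤ ((List.finRange n).map γ).sum := by
      rw [hl]; simp [List.sum_append, List.sum_cons]; omega
    omega
  have hf2 : ContDiff ℝ ((l₂.map γ).sum + 1 : ℕ) f := hf.of_le (by exact_mod_cast hsum2)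
  calc mpd γ (pd j f) = mpdL (l₁ ++ j :: l₂) γ (pd j f) := by rw [mpd_eq_mpdL, hl]
    _ = mpdL l₁ γ ((pd j)^[γ j] (mpdL l₂ γ (pd j f))) := by
        rw [mpdL_append]; rfl
    _ = mpdL l₁ γ ((pd j)^[γ j] (pd j (mpdL l₂ γ f))) := by
        rw [pd_mpdL_comm j l₂ γ f hf2]
    _ = mpdL l₁ γ ((pd j)^[γ j + 1] (mpdL l₂ γ f)) := by
        rw [Function.iterate_succ_apply]
    _ = mpdL l₁ (γ + eI j) ((pd j)^[(γ + eI j) j] (mpdL l₂ (γ + eI j) f)) := by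
        rw [mpdL_congr hc1, mpdL_congr hc2]
        simp [eI]
    _ = mpd (γ + eI j) f := by
        rw [mpd_eq_mpdL, hl, mpdL_append]; rfl

end St7

namespace St7

variable {n : ℕ}

lemma add_eI_eq_update (γ : Fin n → ℕ) (j : Fin n) :
    γ + eI j = Function.update γ j (γ j + 1) := by
  funext i
  rcases eq_or_ne i j with h | h
  · subst h; simp [eI]
  · simp [eI, Function.update_of_ne h, Pi.single_eq_of_ne h]

lemma sum_add_eI (γ : Fin n → ℕ) (j : Fin n) :
    ∑ i, (γ + eI j) i = (∑ i, γ i) + 1 := by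
  rw [add_eI_eq_update]
  rw [Finset.sum_update_of_mem (Finset.mem_univ j),
    Finset.sum_eq_add_sum_sdiff_singleton_of_mem (Finset.mem_univ j) γ]
  omega

end St7

namespace St7

variable {n : ℕ}

lemma prod_pow_add_eI (γ : Fin n → ℕ) (j : Fin n) (y : Fin n → ℝ) :
    ∏ i, y i ^ ((γ + eI j) i) = y j * ∏ i, y i ^ γ i := by
  have h : ∀ i, y i ^ ((γ + eI j) i) = y i ^ γ i * y i ^ (eI j i) := by
    intro i; rw [Pi.add_apply, pow_add]
  rw [Finset.prod_congr rfl (fun i _ => h i), Finset.prod_mul_distrib]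
  have h2 : ∏ i, y i ^ (eI j i) = y j := by
    rw [Finset.prod_eq_single j]
    · simp [eI]
    · intro i _ hij; simp [eI, Pi.single_eq_of_ne hij]
    · intro h; exact absurd (Finset.mem_univ j) h
  rw [h2]; ring

lemma prod_factorial_add_eI (γ : Fin n → ℕ) (j : Fin n) :
    ∏ i, ((γ + eI j) i).factorial = (γ j + 1) * ∏ i, (γ i).factorial := by
  rw [Finset.prod_eq_mul_prod_sdiff_singleton_of_mem (Finset.mem_univ j)
      (fun i => ((γ + eI j) i).factorial),
    Finset.prod_eq_mul_prod_sdiff_singleton_of_mem (Finset.mem_univ j)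
      (fun i => (γ i).factorial)]
  have h1 : ((γ + eI j) j).factorial = (γ j + 1) * (γ j).factorial := by
    simp [eI, Nat.factorial_succ]
  have h2 : ∏ i ∈ Finset.univ \ {j}, ((γ + eI j) i).factorial
      = ∏ i ∈ Finset.univ \ {j}, (γ i).factorial := by
    apply Finset.prod_congr rfl
    intro i hi
    have hij : i ≠ j := by
      simp only [Finset.mem_sdiff, Finset.mem_singleton] at hi
      exact hi.2
    simp [eI, Pi.single_eq_of_ne hij]
  rw [h1, h2]; ring

end St7

namespace St7

variable {n : ℕ}

open Finset

lemma keyK (G : (Fin n → ℕ) → ℝ) (y : Fin n → ℝ) (m : ℕ) :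
    ∑ j, y j * (∑ γ ∈ Finset.Nat.antidiagonalTuple n m,
        G (γ + eI j) * (∏ i, y i ^ γ i) / ((∏ i, (γ i).factorial : ℕ) : ℝ))
      = (m + 1 : ℝ) * ∑ α ∈ Finset.Nat.antidiagonalTuple n (m + 1),
          G α * (∏ i, y i ^ α i) / ((∏ i, (α i).factorial : ℕ) : ℝ) := by
  rw [Finset.mul_sum]
  have hR : ∀ α ∈ Finset.Nat.antidiagonalTuple n (m + 1),
      (m + 1 : ℝ) * (G α * (∏ i, y i ^ α i) / ((∏ i, (α i).factorial : ℕ) : ℝ))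
      = ∑ j, (α j : ℝ) * (G α * (∏ i, y i ^ α i) / ((∏ i, (α i).factorial : ℕ) : ℝ)) := by
    intro α hα
    rw [Finset.Nat.mem_antidiagonalTuple] at hα
    rw [← Finset.sum_mul]
    congr 1
    have h2 : ((∑ i, α i : ℕ) : ℝ) = ∑ i, (α i : ℝ) := by push_cast; rfl
    rw [hα] at h2
    rw [← h2]
    push_cast
    ring
  rw [Finset.sum_congr rfl hR, Finset.sum_comm]
  apply Finset.sum_congr rfl
  intro j _
  rw [Finset.mul_sum]
  apply Finset.sum_of_injOn (fun γ => γ + eI j)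
  · intro a _ b _ hab
    simpa using congrArg (fun h => h - eI j) hab
  · intro γ hγ
    simp only [Finset.coe_sort_coe, Finset.mem_coe, Finset.Nat.mem_antidiagonalTuple] at *
    rw [sum_add_eI, hγ]
  · intro α hα hni
    rw [Finset.Nat.mem_antidiagonalTuple] at hα
    by_cases hz : α j = 0
    · simp [hz]
    · exfalso
      apply hni
      refine ⟨α - eI j, ?_, ?_⟩
      · simp only [Finset.mem_coe, Finset.Nat.mem_antidiagonalTuple]
        have he : (α - eI j) + eI j = α := by
          funext i
          rcases eq_or_ne i j with h | h
          · subst h; simp [eI]; omega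
          · simp [eI, Pi.single_eq_of_ne h]
        have := sum_add_eI (α - eI j) j
        rw [he, hα] at this
        omega
      · funext i
        rcases eq_or_ne i j with h | h
        · subst h; simp [eI]; omega
        · simp [eI, Pi.single_eq_of_ne h]
  · intro γ hγ
    rw [prod_pow_add_eI, prod_factorial_add_eI]
    have hj : ((γ + eI j) j : ℝ) = (γ j : ℝ) + 1 := by simp [eI]
    rw [hj]
    have hfac : ((γ j : ℝ) + 1) ≠ 0 := by positivity
    have hfac2 : ((∏ i, (γ i).factorial : ℕ) : ℝ) ≠ 0 := by
      push_cast
      exact ne_of_gt (Finset.prod_pos fun i _ => by positivity)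
    push_cast
    field_simp

end St7

namespace St7

variable {n : ℕ}

open Finset

/-- Taylor coefficient block of total degree `m`. -/
noncomputable def coeffA (m : ℕ) (f : (Fin n → ℝ) → ℝ) (x y : Fin n → ℝ) : ℝ :=
  ∑ α ∈ Finset.Nat.antidiagonalTuple n m,
    mpd α f x * (∏ j, y j ^ α j) / ((∏ j, (α j).factorial : ℕ) : ℝ)

lemma coeffA_zero (f : (Fin n → ℝ) → ℝ) (x y : Fin n → ℝ) : coeffA 0 f x y = f x := by
  rw [coeffA, Finset.Nat.antidiagonalTuple_zero_right, Finset.sum_singleton]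
  have h0 : (0 : Fin n → ℕ) = fun _ => 0 := rfl
  rw [h0, mpd_zero]
  simp

lemma coeffA_smul (m : ℕ) (f : (Fin n → ℝ) → ℝ) (x y : Fin n → ℝ) (t : ℝ) :
    coeffA m f x (t • y) = t ^ m * coeffA m f x y := by
  rw [coeffA, coeffA, Finset.mul_sum]
  apply Finset.sum_congr rfl
  intro α hα
  rw [Finset.Nat.mem_antidiagonalTuple] at hα
  have h : ∏ j, (t • y) j ^ α j = t ^ m * ∏ j, y j ^ α j := by
    have : ∀ j, (t • y) j ^ α j = t ^ α j * y j ^ α j := by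
      intro j; rw [Pi.smul_apply, smul_eq_mul, mul_pow]
    rw [Finset.prod_congr rfl fun j _ => this j, Finset.prod_mul_distrib,
      Finset.prod_pow_eq_pow_sum, hα]
  rw [h]; ring

lemma sum_coeffA_pd {k : ℕ} (f : (Fin n → ℝ) → ℝ) (hf : ContDiff ℝ (k + 1 : ℕ) f)
    (x y : Fin n → ℝ) {m : ℕ} (hm : m ≤ k) :
    ∑ j, y j * coeffA m (pd j f) x y = (m + 1 : ℝ) * coeffA (m + 1) f x y := by
  have hL : ∑ j, y j * coeffA m (pd j f) x y
      = ∑ j, y j * (∑ γ ∈ Finset.Nat.antidiagonalTuple n m,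
          mpd (γ + eI j) f x * (∏ i, y i ^ γ i) /
            ((∏ i, (γ i).factorial : ℕ) : ℝ)) := by
    apply Finset.sum_congr rfl
    intro j _
    congr 1
    apply Finset.sum_congr rfl
    intro γ hγ
    rw [Finset.Nat.mem_antidiagonalTuple] at hγ
    rw [← mpd_succ j γ f]
    apply hf.of_le
    rw [hγ]
    exact_mod_cast by omega
  rw [hL, coeffA]
  exact keyK (fun α => mpd α f x) y m

lemma fderiv_apply_sum (f : (Fin n → ℝ) → ℝ) (w : Fin n → ℝ) (y : Fin n → ℝ) :
    fderiv ℝ f w y = ∑ j, y j * pd j f w := by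
  conv_lhs => rw [← Finset.univ_sum_single y]
  rw [map_sum]
  apply Finset.sum_congr rfl
  intro j _
  have : Pi.single j (y j) = y j • (Pi.single j 1 : Fin n → ℝ) := by
    rw [← Pi.single_smul, smul_eq_mul, mul_one]
  rw [this, map_smul]
  rfl

end St7

namespace St7

variable {n : ℕ}

open Finset

lemma main_aux (n : ℕ) : ∀ k : ℕ, ∃ c : ℝ, 0 < c ∧
    ∀ δ : ℝ, 0 < δ → ∀ ϖ : ℝ → ℝ,
      (∀ t ∈ Set.Ioc (0:ℝ) δ, 0 < ϖ t) → MonotoneOn ϖ (Set.Ioc 0 δ) →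
      ∀ f : (Fin n → ℝ) → ℝ, ContDiff ℝ (k : ℕ) f → ∀ L : ℝ, 0 ≤ L →
      (∀ α : Fin n → ℕ, (∑ j, α j) = k → ∀ x y : Fin n → ℝ, 0 < ‖x - y‖ → ‖x - y‖ ≤ δ →
        |mpd α f x - mpd α f y| ≤ L * ϖ ‖x - y‖) →
      ∀ x y : Fin n → ℝ, 0 < ‖y‖ → ‖y‖ ≤ δ →
        |f (x + y) - ∑ m ∈ Finset.range (k + 1), coeffA m f x y| ≤ c * L * ϖ ‖y‖ * ‖y‖ ^ k := by
  intro k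
  induction k with
  | zero =>
    refine ⟨1, one_pos, ?_⟩
    intro δ hδ ϖ hpos hmono f hf L hL hH x y hy0 hyδ
    have h0 : ∑ m ∈ Finset.range 1, coeffA m f x y = f x := by
      rw [Finset.sum_range_one, coeffA_zero]
    rw [h0]
    have := hH (fun _ => 0) (by simp) (x + y) x (by simpa using hy0) (by simpa using hyδ)
    rw [mpd_zero] at this
    simpa using this
  | succ k ih =>
    obtain ⟨c, hc, hck⟩ := ih
    refine ⟨n * c + 1, by positivity, ?_⟩
    intro δ hδ ϖ hpos hmono f hf L hL hH x y hy0 hyδ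
    have hϖy : 0 < ϖ ‖y‖ := hpos _ ⟨hy0, hyδ⟩
    set B : ℝ := c * L * ϖ ‖y‖ * ‖y‖ ^ k with hB
    have hB0 : 0 ≤ B := by positivity
    -- the partial derivatives satisfy the inductive hypothesis
    have hGj : ∀ j : Fin n, ∀ z w : Fin n → ℝ, 0 < ‖w‖ → ‖w‖ ≤ δ →
        |pd j f (z + w) - ∑ m ∈ Finset.range (k + 1), coeffA m (pd j f) z w|
          ≤ c * L * ϖ ‖w‖ * ‖w‖ ^ k := by
      intro j
      apply hck δ hδ ϖ hpos hmono (pd j f) (contDiff_pd j hf) L hL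
      intro γ hγ a b hab0 habδ
      rw [mpd_succ j γ f (by rw [hγ]; exact hf)]
      apply hH (γ + eI j) _ a b hab0 habδ
      rw [sum_add_eI, hγ]
    -- bound for the bracket
    have hbr : ∀ j : Fin n, ∀ t ∈ Set.Icc (0:ℝ) 1,
        |pd j f (x + t • y) - ∑ m ∈ Finset.range (k + 1), t ^ m * coeffA m (pd j f) x y|
          ≤ B := by
      intro j t ht
      rcases eq_or_lt_of_le ht.1 with h0 | h0
      · -- t = 0
        subst h0
        have e1 : x + (0:ℝ) • y = x := by simp
        have e2 : ∑ m ∈ Finset.range (k + 1), (0:ℝ) ^ m * coeffA m (pd j f) x y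
            = pd j f x := by
          rw [Finset.sum_eq_single 0]
          · rw [pow_zero, one_mul, coeffA_zero]
          · intro m _ hm; rw [zero_pow hm, zero_mul]
          · intro h; exact absurd (Finset.mem_range.mpr (by omega)) h
        rw [e1, e2, sub_self, abs_zero]
        exact hB0
      · -- 0 < t
        have hty : ‖t • y‖ = t * ‖y‖ := by
          rw [norm_smul, Real.norm_eq_abs, abs_of_pos h0]
        have hty0 : 0 < ‖t • y‖ := by rw [hty]; positivity
        have htyδ : ‖t • y‖ ≤ δ := by
          rw [hty]
          calc t * ‖y‖ ≤ 1 * ‖y‖ := by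
                apply mul_le_mul_of_nonneg_right ht.2 (le_of_lt hy0)
            _ = ‖y‖ := one_mul _
            _ ≤ δ := hyδ
        have := hGj j x (t • y) hty0 htyδ
        have e3 : ∀ m, coeffA m (pd j f) x (t • y) = t ^ m * coeffA m (pd j f) x y :=
          fun m => coeffA_smul m (pd j f) x y t
        rw [Finset.sum_congr rfl (fun m _ => e3 m)] at this
        refine le_trans this ?_
        rw [hB]
        have hϖt : ϖ ‖t • y‖ ≤ ϖ ‖y‖ := by
          apply hmono ⟨hty0, htyδ⟩ ⟨hy0, hyδ⟩
          rw [hty]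
          calc t * ‖y‖ ≤ 1 * ‖y‖ := mul_le_mul_of_nonneg_right ht.2 (le_of_lt hy0)
            _ = ‖y‖ := one_mul _
        have hpk : ‖t • y‖ ^ k ≤ ‖y‖ ^ k := by
          apply pow_le_pow_left₀ (norm_nonneg _)
          rw [hty]
          calc t * ‖y‖ ≤ 1 * ‖y‖ := mul_le_mul_of_nonneg_right ht.2 (le_of_lt hy0)
            _ = ‖y‖ := one_mul _
        have hϖt0 : 0 < ϖ ‖t • y‖ := hpos _ ⟨hty0, htyδ⟩
        calc c * L * ϖ ‖t • y‖ * ‖t • y‖ ^ k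
            ≤ c * L * ϖ ‖y‖ * ‖t • y‖ ^ k := by
              apply mul_le_mul_of_nonneg_right _ (by positivity)
              apply mul_le_mul_of_nonneg_left hϖt (by positivity)
          _ ≤ c * L * ϖ ‖y‖ * ‖y‖ ^ k := by
              apply mul_le_mul_of_nonneg_left hpk (by positivity)
    -- the function φ and its derivative
    have hdiff : Differentiable ℝ f := hf.differentiable (by simp)
    set φ : ℝ → ℝ := fun t =>
      f (x + t • y) - ∑ m ∈ Finset.range (k + 2), t ^ m * coeffA m f x y with hφ
    have hD : ∀ t : ℝ, HasDerivAt φ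
        (∑ j, y j * (pd j f (x + t • y)
            - ∑ m ∈ Finset.range (k + 1), t ^ m * coeffA m (pd j f) x y)) t := by
      intro t
      have hz : HasDerivAt (fun s : ℝ => x + s • y) y t := by
        simpa using ((hasDerivAt_id t).smul_const y).const_add x
      have h1 : HasDerivAt (fun s : ℝ => f (x + s • y))
          (fderiv ℝ f (x + t • y) y) t :=
        (hdiff (x + t • y)).hasFDerivAt.comp_hasDerivAt t hz
      have h2 : HasDerivAt (fun s : ℝ => ∑ m ∈ Finset.range (k + 2), s ^ m * coeffA m f x y)
          (∑ m ∈ Finset.range (k + 2), (m * t ^ (m - 1)) * coeffA m f x y) t := by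
        apply HasDerivAt.fun_sum
        intro m _
        exact (hasDerivAt_pow m t).mul_const _
      have h3 := h1.sub h2
      have e4 : fderiv ℝ f (x + t • y) y - ∑ m ∈ Finset.range (k + 2),
          (m * t ^ (m - 1)) * coeffA m f x y
          = ∑ j, y j * (pd j f (x + t • y)
            - ∑ m ∈ Finset.range (k + 1), t ^ m * coeffA m (pd j f) x y) := by
        rw [fderiv_apply_sum]
        rw [Finset.sum_range_succ' (fun m => (m * t ^ (m - 1) : ℝ) * coeffA m f x y) (k + 1)]
        simp only [Nat.cast_zero, zero_mul, Nat.cast_add, Nat.cast_one, add_zero,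
          Nat.add_sub_cancel, pow_zero, one_mul]
        have e5 : ∑ m ∈ Finset.range (k + 1), ((m + 1 : ℝ) * t ^ m) * coeffA (m + 1) f x y
            = ∑ m ∈ Finset.range (k + 1), t ^ m * ∑ j, y j * coeffA m (pd j f) x y := by
          apply Finset.sum_congr rfl
          intro m hm
          rw [Finset.mem_range] at hm
          rw [sum_coeffA_pd f hf x y (by omega : m ≤ k)]
          ring
        rw [e5]
        simp only [mul_sub]
        rw [Finset.sum_sub_distrib]
        congr 1
        simp only [Finset.mul_sum]
        rw [Finset.sum_comm]
        apply Finset.sum_congr rfl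
        intro m _
        apply Finset.sum_congr rfl
        intro j _
        ring
      rw [e4] at h3
      exact h3
    -- mean value estimate on [0,1]
    have hC : ∀ t ∈ Set.Icc (0:ℝ) 1,
        ‖∑ j, y j * (pd j f (x + t • y)
            - ∑ m ∈ Finset.range (k + 1), t ^ m * coeffA m (pd j f) x y)‖
          ≤ n * ‖y‖ * B := by
      intro t ht
      calc ‖∑ j, y j * (pd j f (x + t • y)
            - ∑ m ∈ Finset.range (k + 1), t ^ m * coeffA m (pd j f) x y)‖
          ≤ ∑ j, ‖y j * (pd j f (x + t • y)
            - ∑ m ∈ Finset.range (k + 1), t ^ m * coeffA m (pd j f) x y)‖ :=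
            norm_sum_le _ _
        _ ≤ ∑ _j : Fin n, ‖y‖ * B := by
            apply Finset.sum_le_sum
            intro j _
            rw [norm_mul]
            apply mul_le_mul (norm_le_pi_norm y j) _ (norm_nonneg _) (norm_nonneg _)
            exact hbr j t ht
        _ = n * ‖y‖ * B := by
            rw [Finset.sum_const, Finset.card_univ, Fintype.card_fin, nsmul_eq_mul]
            ring
    have hMVT := Convex.norm_image_sub_le_of_norm_hasDerivWithin_le
      (f := φ) (C := n * ‖y‖ * B)
      (fun t ht => (hD t).hasDerivWithinAt) hC (convex_Icc 0 1)
      (Set.left_mem_Icc.mpr zero_le_one) (Set.right_mem_Icc.mpr zero_le_one)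
    have hφ0 : φ 0 = 0 := by
      rw [hφ]
      simp only [zero_smul, add_zero]
      have : ∑ m ∈ Finset.range (k + 2), (0:ℝ) ^ m * coeffA m f x y = f x := by
        rw [Finset.sum_eq_single 0]
        · rw [pow_zero, one_mul, coeffA_zero]
        · intro m _ hm; rw [zero_pow hm, zero_mul]
        · intro h; exact absurd (Finset.mem_range.mpr (by omega)) h
      rw [this, sub_self]
    have hφ1 : φ 1 = f (x + y) - ∑ m ∈ Finset.range (k + 2), coeffA m f x y := by
      rw [hφ]
      simp [one_smul]
    rw [hφ0, sub_zero, hφ1] at hMVT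
    have : ‖(1:ℝ) - 0‖ = 1 := by norm_num
    rw [this, mul_one] at hMVT
    rw [← Real.norm_eq_abs]
    refine le_trans hMVT ?_
    rw [hB]
    have : (n : ℝ) * ‖y‖ * (c * L * ϖ ‖y‖ * ‖y‖ ^ k)
        = (n * c) * L * ϖ ‖y‖ * ‖y‖ ^ (k + 1) := by ring
    rw [this]
    apply mul_le_mul_of_nonneg_right _ (by positivity)
    apply mul_le_mul_of_nonneg_right _ (le_of_lt hϖy)
    apply mul_le_mul_of_nonneg_right _ hL
    linarith

end St7

namespace St7

variable {n : ℕ}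

lemma sum_conversion (k : ℕ) (f : (Fin n → ℝ) → ℝ) (x y : Fin n → ℝ) :
    ∑ b : Fin n → Fin (k + 1),
        (if (∑ j, (b j : ℕ)) ≤ k then
          mpd (fun j => (b j : ℕ)) f x * (∏ j, y j ^ (b j : ℕ)) /
            ((∏ j, Nat.factorial (b j : ℕ) : ℕ) : ℝ)
        else 0)
      = ∑ m ∈ Finset.range (k + 1), coeffA m f x y := by
  classical
  set T : (Fin n → ℕ) → ℝ := fun α =>
    mpd α f x * (∏ j, y j ^ α j) / ((∏ j, (α j).factorial : ℕ) : ℝ) with hT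
  have hL : ∑ b : Fin n → Fin (k + 1),
      (if (∑ j, (b j : ℕ)) ≤ k then
        mpd (fun j => (b j : ℕ)) f x * (∏ j, y j ^ (b j : ℕ)) /
          ((∏ j, Nat.factorial (b j : ℕ) : ℕ) : ℝ)
      else 0)
      = ∑ b ∈ Finset.univ.filter (fun b : Fin n → Fin (k + 1) => (∑ j, (b j : ℕ)) ≤ k),
          T (fun j => (b j : ℕ)) := by
    rw [Finset.sum_filter]
  have hR : ∑ m ∈ Finset.range (k + 1), coeffA m f x y
      = ∑ p ∈ (Finset.range (k + 1)).sigma (fun m => Finset.Nat.antidiagonalTuple n m),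
          T p.2 := by
    rw [Finset.sum_sigma]
    rfl
  rw [hL, hR]
  apply Finset.sum_nbij' (i := fun b => (⟨∑ j, (b j : ℕ), fun j => (b j : ℕ)⟩ :
      Σ _ : ℕ, Fin n → ℕ))
    (j := fun p => fun jj => (⟨min (p.2 jj) k, by omega⟩ : Fin (k + 1)))
  · intro b hb
    rw [Finset.mem_filter] at hb
    refine Finset.mem_sigma.mpr ⟨?_, Finset.Nat.mem_antidiagonalTuple.mpr rfl⟩
    exact Finset.mem_range.mpr (Nat.lt_succ_of_le hb.2)
  · intro p hp
    rw [Finset.mem_sigma, Finset.mem_range, Finset.Nat.mem_antidiagonalTuple] at hp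
    rw [Finset.mem_filter]
    refine ⟨Finset.mem_univ _, ?_⟩
    have hle : ∀ jj, p.2 jj ≤ k := by
      intro jj
      have h1 := Finset.single_le_sum (f := p.2) (fun i _ => Nat.zero_le _) (Finset.mem_univ jj)
      have h2 : ∑ i, p.2 i = p.1 := hp.2
      have h3 : p.1 < k + 1 := hp.1
      omega
    have heq : ∀ jj, ((⟨min (p.2 jj) k, by omega⟩ : Fin (k + 1)) : ℕ) = p.2 jj := by
      intro jj; simp [Nat.min_eq_left (hle jj)]
    calc ∑ j, (((fun jj => (⟨min (p.2 jj) k, by omega⟩ : Fin (k + 1))) j : ℕ))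
        = ∑ i, p.2 i := Finset.sum_congr rfl (fun jj _ => heq jj)
      _ = p.1 := hp.2
      _ ≤ k := Nat.lt_succ_iff.mp hp.1
  · intro b hb
    rw [Finset.mem_filter] at hb
    funext jj
    have hle : (b jj : ℕ) ≤ k := by
      have h1 := Finset.single_le_sum (f := fun j => (b j : ℕ))
        (fun i _ => Nat.zero_le _) (Finset.mem_univ jj)
      have h2 := hb.2
      omega
    apply Fin.ext
    simp [Nat.min_eq_left hle]
  · intro p hp
    rw [Finset.mem_sigma, Finset.mem_range, Finset.Nat.mem_antidiagonalTuple] at hp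
    have hle : ∀ jj, p.2 jj ≤ k := by
      intro jj
      have h1 := Finset.single_le_sum (f := p.2) (fun i _ => Nat.zero_le _) (Finset.mem_univ jj)
      have h2 : ∑ i, p.2 i = p.1 := hp.2
      have h3 : p.1 < k + 1 := hp.1
      omega
    have hfun : (fun jj => (((⟨min (p.2 jj) k, by omega⟩ : Fin (k + 1))) : ℕ)) = p.2 := by
      funext jj; simp [Nat.min_eq_left (hle jj)]
    refine Sigma.ext ?_ ?_
    · show (∑ j, (((⟨min (p.2 j) k, by omega⟩ : Fin (k + 1))) : ℕ)) = p.1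
      calc (∑ j, (((⟨min (p.2 j) k, by omega⟩ : Fin (k + 1))) : ℕ))
          = ∑ i, p.2 i := Finset.sum_congr rfl (fun jj _ => by simp [Nat.min_eq_left (hle jj)])
        _ = p.1 := hp.2
    · exact heq_of_eq hfun
  · intro b _
    rfl

end St7


/-- Taylor remainder estimate in terms of a modulus of continuity. -/
theorem statement7 (n k : ℕ) :
    ∃ c : ℝ, 0 < c ∧
      ∀ δ : ℝ, 0 < δ →
      ∀ ϖ : ℝ → ℝ,
        -- ϖ is a modulus of continuity on (0, δ]
        (∀ t ∈ Set.Ioc (0 : ℝ) δ, 0 < ϖ t) →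
        MonotoneOn ϖ (Set.Ioc 0 δ) →
        ContinuousOn ϖ (Set.Ioc 0 δ) →
        Filter.Tendsto ϖ (nhdsWithin 0 (Set.Ioi 0)) (nhds 0) →
        (∃ Cq : ℝ, ∀ᶠ t in nhdsWithin 0 (Set.Ioi 0), t / ϖ t ≤ Cq) →
      ∀ f : (Fin n → ℝ) → ℝ, ContDiff ℝ k f →
      ∀ L : ℝ, 0 ≤ L →
        (∀ α : Fin n → ℕ, (∑ j, α j) = k →
          ∀ x y : Fin n → ℝ, 0 < ‖x - y‖ → ‖x - y‖ ≤ δ →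
            |mpd α f x - mpd α f y| ≤ L * ϖ ‖x - y‖) →
      ∀ x y : Fin n → ℝ, 0 < ‖y‖ → ‖y‖ ≤ δ →
        |f (x + y) -
            ∑ b : Fin n → Fin (k + 1),
              (if (∑ j, (b j : ℕ)) ≤ k then
                mpd (fun j => (b j : ℕ)) f x * (∏ j, y j ^ (b j : ℕ)) /
                  ((∏ j, Nat.factorial (b j : ℕ) : ℕ) : ℝ)
              else 0)| ≤
          c * L * ϖ ‖y‖ * ‖y‖ ^ k := by
  obtain ⟨c, hc, hmain⟩ := St7.main_aux n k
  refine ⟨c, hc, ?_⟩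
  intro δ hδ ϖ hpos hmono _ _ _ f hf L hL hH x y hy0 hyδ
  rw [St7.sum_conversion k f x y]
  exact hmain δ hδ ϖ hpos hmono f hf L hL hH x y hy0 hyδ
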